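/- In the homogeneous two-study setting, the pooled consistency probability H(f₁, f₂) = (1/(1−β)²)∫_{−√2 z_{1−β}}^∞ Φ((1−π)(√2 x + 2c)/√(1/f₁ + 1/f₂ − 2))·(2Φ(x+√2 z_{1−β}) − 1)·φ(x)dx depends on (f₁, f₂) only through c' = 1/f₁ + 1/f₂ and is strictly decreasing in c'. -/

import Mathlib

open MeasureTheory

/-- Standard normal density. -/
noncomputable def stdNormalPdf (t : ℝ) : ℝ :=
  (Real.sqrt (2 * Real.pi))⁻¹ * Real.exp (-(t ^ 2) / 2)

/-- Standard normal cumulative distribution function. -/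
noncomputable def stdNormalCdf (x : ℝ) : ℝ := ∫ t in Set.Iic x, stdNormalPdf t

open Set

lemma pdf_pos (t : ℝ) : 0 < stdNormalPdf t := by
  unfold stdNormalPdf
  positivity

lemma pdf_eq (t : ℝ) : stdNormalPdf t = (Real.sqrt (2 * Real.pi))⁻¹ * Real.exp (-(2⁻¹ : ℝ) * t ^ 2) := by
  unfold stdNormalPdf; ring_nf

lemma pdf_continuous : Continuous stdNormalPdf := by
  unfold stdNormalPdf; fun_prop

lemma pdf_integrable : Integrable stdNormalPdf := by
  have := (integrable_exp_neg_mul_sq (by norm_num : (0:ℝ) < 2⁻¹)).const_mul (Real.sqrt (2 * Real.pi))⁻¹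
  refine this.congr (Filter.Eventually.of_forall fun t => (pdf_eq t).symm)

lemma pdf_integral : ∫ t, stdNormalPdf t = 1 := by
  have h2 : ∫ t : ℝ, Real.exp (-(2⁻¹:ℝ) * t ^ 2) = Real.sqrt (Real.pi / 2⁻¹) := integral_gaussian _
  have : ∫ t, stdNormalPdf t = (Real.sqrt (2 * Real.pi))⁻¹ * ∫ t : ℝ, Real.exp (-(2⁻¹:ℝ) * t ^ 2) := by
    rw [← integral_const_mul]; exact integral_congr_ae (Filter.Eventually.of_forall fun t => pdf_eq t)
  rw [this, h2]
  rw [show Real.pi / 2⁻¹ = 2 * Real.pi by ring]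
  rw [inv_mul_cancel₀ (by positivity)]

lemma pdf_anti {a b : ℝ} (hab : a ≤ b) (hb : |b| ≤ |a|) : stdNormalPdf a ≤ stdNormalPdf b := by
  unfold stdNormalPdf
  have hsq : b ^ 2 ≤ a ^ 2 := by
    rw [← sq_abs a, ← sq_abs b]
    exact pow_le_pow_left₀ (abs_nonneg b) hb 2
  exact mul_le_mul_of_nonneg_left (Real.exp_le_exp.2 (by linarith)) (by positivity)

lemma cdf_sub {a b : ℝ} : stdNormalCdf b - stdNormalCdf a = ∫ t in a..b, stdNormalPdf t :=
  intervalIntegral.integral_Iic_sub_Iic pdf_integrable.integrableOn pdf_integrable.integrableOn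

lemma cdf_strictMono : StrictMono stdNormalCdf := by
  intro a b hab
  have h : 0 < ∫ t in a..b, stdNormalPdf t := by
    apply intervalIntegral.intervalIntegral_pos_of_pos_on
      (pdf_integrable.intervalIntegrable) (fun x _ => pdf_pos x) hab
  have := cdf_sub (a := a) (b := b)
  linarith

lemma cdf_mono : Monotone stdNormalCdf := cdf_strictMono.monotone

lemma cdf_nonneg (x : ℝ) : 0 ≤ stdNormalCdf x :=
  setIntegral_nonneg measurableSet_Iic fun t _ => (pdf_pos t).le

lemma cdf_le_one (x : ℝ) : stdNormalCdf x ≤ 1 := by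
  rw [← pdf_integral]
  exact setIntegral_le_integral pdf_integrable
    (Filter.Eventually.of_forall fun t => (pdf_pos t).le)

lemma cdf_neg (x : ℝ) : stdNormalCdf (-x) = 1 - stdNormalCdf x := by
  have h1 : stdNormalCdf (-x) = ∫ t in Set.Iic (-x), stdNormalPdf t := rfl
  have heven : ∀ t : ℝ, stdNormalPdf (-t) = stdNormalPdf t := by
    intro t; unfold stdNormalPdf; ring_nf
  have h2 : (∫ t in Set.Iic (-x), stdNormalPdf t) = ∫ t in Set.Ioi x, stdNormalPdf t := by
    have := integral_comp_neg_Iic (-x) stdNormalPdf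
    rw [neg_neg] at this
    rw [← this]
    exact setIntegral_congr_fun measurableSet_Iic fun t _ => (heven t).symm
  have h3 : (∫ t in Set.Iic x, stdNormalPdf t) + ∫ t in Set.Ioi x, stdNormalPdf t = 1 := by
    rw [intervalIntegral.integral_Iic_add_Ioi pdf_integrable.integrableOn pdf_integrable.integrableOn, pdf_integral]
  unfold stdNormalCdf
  rw [h2]; linarith

lemma cdf_zero : stdNormalCdf 0 = 1/2 := by
  have := cdf_neg 0
  rw [neg_zero] at this; linarith

lemma cdf_measurable : Measurable stdNormalCdf := cdf_mono.measurable

lemma integrable_weighted {g : ℝ → ℝ} (hg : Measurable g) (hbd : ∀ x, |g x| ≤ 1) :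
    Integrable (fun x => g x * stdNormalPdf x) := by
  refine pdf_integrable.mono ((hg.mul pdf_continuous.measurable).aestronglyMeasurable) ?_
  filter_upwards with x
  simp only [norm_mul, Real.norm_eq_abs, abs_of_pos (pdf_pos x)]
  calc |g x| * stdNormalPdf x ≤ 1 * stdNormalPdf x :=
        mul_le_mul_of_nonneg_right (hbd x) (pdf_pos x).le
    _ = stdNormalPdf x := one_mul _

lemma key_pos (k s₁ s₂ L x₀ : ℝ) (hk : 0 < k) (hs₁ : 0 < s₁) (h12 : s₁ < s₂) (hx₀ : x₀ < 0) :
    0 < ∫ x in Set.Ioi L,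
      (stdNormalCdf (k * (x - x₀) / s₁) - stdNormalCdf (k * (x - x₀) / s₂))
        * ((2 * stdNormalCdf (x - L) - 1) * stdNormalPdf x) := by
  have hs₂ : 0 < s₂ := hs₁.trans h12
  set D : ℝ → ℝ := fun x => stdNormalCdf (k * (x - x₀) / s₁) - stdNormalCdf (k * (x - x₀) / s₂)
    with hD
  set W : ℝ → ℝ := fun x => (2 * stdNormalCdf (x - L) - 1) * stdNormalPdf x with hW
  set F : ℝ → ℝ := fun x => D x * W x with hF
  -- basic sign facts
  have hDpos : ∀ x, x₀ < x → 0 < D x := by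
    intro x hx
    have hnum : 0 < k * (x - x₀) := mul_pos hk (by linarith)
    exact sub_pos.mpr (cdf_strictMono (div_lt_div_of_pos_left hnum hs₁ h12))
  have hDnonneg : ∀ x, x₀ ≤ x → 0 ≤ D x := by
    intro x hx
    rcases eq_or_lt_of_le hx with h | h
    · simp [hD, ← h]
    · exact (hDpos x h).le
  have hDanti : ∀ y, D (2 * x₀ - y) = -D y := by
    intro y
    have h1 : k * (2 * x₀ - y - x₀) = -(k * (y - x₀)) := by ring
    simp only [hD, h1, neg_div, cdf_neg]
    ring
  have hWpos : ∀ x, L < x → 0 < W x := by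
    intro x hx
    have : (1:ℝ)/2 < stdNormalCdf (x - L) := by
      rw [← cdf_zero]; exact cdf_strictMono (by linarith)
    exact mul_pos (by linarith) (pdf_pos x)
  have hWnonneg : ∀ x, L ≤ x → 0 ≤ W x := by
    intro x hx
    have : (1:ℝ)/2 ≤ stdNormalCdf (x - L) := by
      rw [← cdf_zero]; exact cdf_mono (by linarith)
    exact mul_nonneg (by linarith) (pdf_pos x).le
  -- integrability
  have habs : ∀ (a : ℝ), |stdNormalCdf a| ≤ 1 := fun a => by
    rw [abs_of_nonneg (cdf_nonneg a)]; exact cdf_le_one a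
  have hgmeas : Measurable fun x => D x * (2 * stdNormalCdf (x - L) - 1) := by
    apply Measurable.mul
    · exact (cdf_measurable.comp (by fun_prop)).sub (cdf_measurable.comp (by fun_prop))
    · exact ((cdf_measurable.comp (by fun_prop)).const_mul 2).sub measurable_const
  have hgbd : ∀ x, |D x * (2 * stdNormalCdf (x - L) - 1)| ≤ 1 := by
    intro x
    rw [abs_mul]
    have h1 : |D x| ≤ 1 := by
      have := cdf_nonneg (k * (x - x₀) / s₁)
      have := cdf_le_one (k * (x - x₀) / s₁)
      have := cdf_nonneg (k * (x - x₀) / s₂)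
      have := cdf_le_one (k * (x - x₀) / s₂)
      rw [abs_le]; constructor <;> simp only [hD] <;> linarith
    have h2 : |2 * stdNormalCdf (x - L) - 1| ≤ 1 := by
      have := cdf_nonneg (x - L)
      have := cdf_le_one (x - L)
      rw [abs_le]; constructor <;> linarith
    calc |D x| * |2 * stdNormalCdf (x - L) - 1| ≤ 1 * 1 := by
          exact mul_le_mul h1 h2 (abs_nonneg _) zero_le_one
      _ = 1 := one_mul 1
  have hFint : Integrable F := by
    have : F = fun x => (D x * (2 * stdNormalCdf (x - L) - 1)) * stdNormalPdf x := by
      funext x; simp only [hF, hW]; ring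
    rw [this]
    exact integrable_weighted hgmeas hgbd
  -- positivity of tail integrals
  have htail : ∀ M : ℝ, x₀ ≤ M → L ≤ M → 0 < ∫ x in Set.Ioi M, F x := by
    intro M hM1 hM2
    have hFposOn : ∀ x ∈ Set.Ioi M, 0 < F x := fun x hx =>
      mul_pos (hDpos x (lt_of_le_of_lt hM1 hx)) (hWpos x (lt_of_le_of_lt hM2 hx))
    rw [setIntegral_pos_iff_support_of_nonneg_ae]
    · have hsub : Set.Ioi M ⊆ Function.support F ∩ Set.Ioi M := fun x hx =>
        ⟨(hFposOn x hx).ne', hx⟩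
      calc (0:ENNReal) < volume (Set.Ioi M) := by rw [Real.volume_Ioi]; exact ENNReal.zero_lt_top
        _ ≤ volume (Function.support F ∩ Set.Ioi M) := measure_mono hsub
    · filter_upwards [ae_restrict_mem measurableSet_Ioi] with x hx
      exact (hFposOn x hx).le
    · exact hFint.integrableOn
  rcases le_or_gt x₀ L with hcase | hcase
  · exact htail L hcase le_rfl
  · -- L < x₀ < 0
    set M : ℝ := 2 * x₀ - L with hM
    have hLM : L < M := by simp only [hM]; linarith
    have hx₀M : x₀ < M := by simp only [hM]; linarith
    have hsplit : ∫ x in Set.Ioi L, F x = (∫ x in Set.Ioc L M, F x) + ∫ x in Set.Ioi M, F x := by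
      rw [← setIntegral_union (Set.Ioc_disjoint_Ioi le_rfl) measurableSet_Ioi
        hFint.integrableOn hFint.integrableOn, Set.Ioc_union_Ioi_eq_Ioi hLM.le]
    have hIoc : (∫ x in Set.Ioc L M, F x) = ∫ y in x₀..M, (F (2 * x₀ - y) + F y) := by
      have h1 : (∫ x in Set.Ioc L M, F x) = ∫ x in L..M, F x :=
        (intervalIntegral.integral_of_le hLM.le).symm
      have h2 : (∫ x in L..M, F x) = (∫ x in L..x₀, F x) + ∫ x in x₀..M, F x :=
        (intervalIntegral.integral_add_adjacent_intervals
          hFint.intervalIntegrable hFint.intervalIntegrable).symm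
      have h3 : (∫ x in L..x₀, F x) = ∫ y in x₀..M, F (2 * x₀ - y) := by
        rw [intervalIntegral.integral_comp_sub_left F (2 * x₀),
          show 2 * x₀ - M = L by rw [hM]; ring, show 2 * x₀ - x₀ = x₀ by ring]
      have hI1 : IntervalIntegrable (fun y => F (2 * x₀ - y)) volume x₀ M := by
        have h := (hFint.intervalIntegrable (a := L) (b := x₀)).comp_sub_left (2 * x₀)
        rw [show 2 * x₀ - L = M by rw [hM], show 2 * x₀ - x₀ = x₀ by ring] at h
        exact h.symm
      rw [h1, h2, h3, ← intervalIntegral.integral_add hI1 hFint.intervalIntegrable]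
    have hIocNonneg : 0 ≤ ∫ y in x₀..M, (F (2 * x₀ - y) + F y) := by
      apply intervalIntegral.integral_nonneg hx₀M.le
      intro y hy
      obtain ⟨hy1, hy2⟩ := hy
      have hkey : F (2 * x₀ - y) + F y = D y * (W y - W (2 * x₀ - y)) := by
        simp only [hF, hDanti y]; ring
      rw [hkey]
      apply mul_nonneg (hDnonneg y hy1)
      -- W y ≥ W (2x₀ - y)
      set y' : ℝ := 2 * x₀ - y with hy'
      have hy'L : L ≤ y' := by simp only [hy']; simp only [hM] at hy2; linarith
      have hy'y : y' ≤ y := by simp only [hy']; linarith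
      have hy'neg : y' ≤ 0 := by simp only [hy']; linarith
      have hφ : stdNormalPdf y' ≤ stdNormalPdf y := by
        apply pdf_anti hy'y
        rw [abs_of_nonpos hy'neg]
        rw [abs_le]
        constructor <;> simp only [hy'] <;> linarith
      have hA : 2 * stdNormalCdf (y' - L) - 1 ≤ 2 * stdNormalCdf (y - L) - 1 := by
        have := cdf_mono (show y' - L ≤ y - L by linarith)
        linarith
      have hAnn : 0 ≤ 2 * stdNormalCdf (y' - L) - 1 := by
        have : (1:ℝ)/2 ≤ stdNormalCdf (y' - L) := by
          rw [← cdf_zero]; exact cdf_mono (by linarith)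
        linarith
      have : W y' ≤ W y := by
        simp only [hW]
        calc (2 * stdNormalCdf (y' - L) - 1) * stdNormalPdf y'
            ≤ (2 * stdNormalCdf (y' - L) - 1) * stdNormalPdf y :=
              mul_le_mul_of_nonneg_left hφ hAnn
          _ ≤ (2 * stdNormalCdf (y - L) - 1) * stdNormalPdf y :=
              mul_le_mul_of_nonneg_right hA (pdf_pos y).le
      linarith
    have := htail M hx₀M.le hLM.le
    rw [hsplit, hIoc]
    linarith

lemma abs_cdf_le_one (a : ℝ) : |stdNormalCdf a| ≤ 1 := by
  rw [abs_of_nonneg (cdf_nonneg a)]; exact cdf_le_one a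

lemma abs_two_cdf_sub_one_le_one (a : ℝ) : |2 * stdNormalCdf a - 1| ≤ 1 := by
  have := cdf_nonneg a; have := cdf_le_one a
  rw [abs_le]; constructor <;> linarith

lemma integrand_integrable {A B : ℝ → ℝ} (hA : Measurable A) (hB : Measurable B) :
    Integrable (fun x => stdNormalCdf (A x) * (2 * stdNormalCdf (B x) - 1) * stdNormalPdf x) := by
  apply integrable_weighted
    ((cdf_measurable.comp hA).mul
      (((cdf_measurable.comp hB).const_mul 2).sub measurable_const))
  intro x
  show |stdNormalCdf (A x) * (2 * stdNormalCdf (B x) - 1)| ≤ 1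
  rw [abs_mul]
  calc |stdNormalCdf (A x)| * |2 * stdNormalCdf (B x) - 1| ≤ 1 * 1 :=
        mul_le_mul (abs_cdf_le_one _) (abs_two_cdf_sub_one_le_one _) (abs_nonneg _) zero_le_one
    _ = 1 := one_mul 1

/-- In the homogeneous two-study setting, the pooled criterion-I consistency probability
`H(f₁, f₂)` depends on `(f₁, f₂)` only through `c' = 1/f₁ + 1/f₂` and is strictly
decreasing in `c'`. -/
theorem stmt11 (π α β zα zβ : ℝ)
    (hπ : π ∈ Set.Ioo (0 : ℝ) 1) (hα : α ∈ Set.Ioo (0 : ℝ) 1) (hβ : β ∈ Set.Ioo (0 : ℝ) 1)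
    (hzα : stdNormalCdf zα = 1 - α) (hzβ : stdNormalCdf zβ = 1 - β)
    (c : ℝ) (hc : c = zα + zβ) (hcpos : 0 < c)
    (H : ℝ → ℝ → ℝ)
    (hH : ∀ f1 f2 : ℝ, H f1 f2
      = (1 / (1 - β) ^ 2) * ∫ x in Set.Ioi (-(Real.sqrt 2 * zβ)),
          stdNormalCdf ((1 - π) * (Real.sqrt 2 * x + 2 * c)
              / Real.sqrt (1 / f1 + 1 / f2 - 2))
            * (2 * stdNormalCdf (x + Real.sqrt 2 * zβ) - 1) * stdNormalPdf x) :
    (∀ f1 f2 g1 g2 : ℝ, f1 ∈ Set.Ioo (0:ℝ) 1 → f2 ∈ Set.Ioo (0:ℝ) 1 →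
        g1 ∈ Set.Ioo (0:ℝ) 1 → g2 ∈ Set.Ioo (0:ℝ) 1 →
        1 / f1 + 1 / f2 = 1 / g1 + 1 / g2 → H f1 f2 = H g1 g2)
    ∧ (∀ f1 f2 g1 g2 : ℝ, f1 ∈ Set.Ioo (0:ℝ) 1 → f2 ∈ Set.Ioo (0:ℝ) 1 →
        g1 ∈ Set.Ioo (0:ℝ) 1 → g2 ∈ Set.Ioo (0:ℝ) 1 →
        1 / f1 + 1 / f2 < 1 / g1 + 1 / g2 → H g1 g2 < H f1 f2) := by
  constructor
  · intro f1 f2 g1 g2 _ _ _ _ heq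
    rw [hH, hH, heq]
  · intro f1 f2 g1 g2 hf1 hf2 hg1 hg2 hlt
    have h2lt : ∀ f : ℝ, f ∈ Set.Ioo (0:ℝ) 1 → 1 < 1 / f := fun f hf =>
      one_lt_one_div hf.1 hf.2
    have hcf : 2 < 1 / f1 + 1 / f2 := by
      have := h2lt f1 hf1; have := h2lt f2 hf2; linarith
    have hcg : 2 < 1 / g1 + 1 / g2 := by linarith
    set s₁ : ℝ := Real.sqrt (1 / f1 + 1 / f2 - 2) with hs₁def
    set s₂ : ℝ := Real.sqrt (1 / g1 + 1 / g2 - 2) with hs₂def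
    have hs₁ : 0 < s₁ := Real.sqrt_pos.mpr (by linarith)
    have h12 : s₁ < s₂ := Real.sqrt_lt_sqrt (by linarith) (by linarith)
    set L : ℝ := -(Real.sqrt 2 * zβ) with hLdef
    set x₀ : ℝ := -(Real.sqrt 2 * c) with hx₀def
    have hsqrt2 : (0:ℝ) < Real.sqrt 2 := Real.sqrt_pos.mpr (by norm_num)
    have hx₀ : x₀ < 0 := by
      rw [hx₀def, neg_lt, neg_zero]; exact mul_pos hsqrt2 hcpos
    have hk : 0 < (1 - π) * Real.sqrt 2 := mul_pos (by linarith [hπ.2]) hsqrt2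
    have h2 : Real.sqrt 2 * Real.sqrt 2 = 2 := Real.mul_self_sqrt (by norm_num)
    have key := key_pos ((1 - π) * Real.sqrt 2) s₁ s₂ L x₀ hk hs₁ h12 hx₀
    -- integrability of the two integrands
    have hmeasA : ∀ s : ℝ, Measurable fun x : ℝ => (1 - π) * (Real.sqrt 2 * x + 2 * c) / s := by
      intro s; fun_prop
    have hmeasB : Measurable fun x : ℝ => x + Real.sqrt 2 * zβ := by fun_prop
    have hint1 := integrand_integrable (hmeasA s₁) hmeasB
    have hint2 := integrand_integrable (hmeasA s₂) hmeasB
    have hdiff : H f1 f2 - H g1 g2 = (1 / (1 - β) ^ 2) * ∫ x in Set.Ioi L,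
        (stdNormalCdf ((1 - π) * Real.sqrt 2 * (x - x₀) / s₁)
          - stdNormalCdf ((1 - π) * Real.sqrt 2 * (x - x₀) / s₂))
          * ((2 * stdNormalCdf (x - L) - 1) * stdNormalPdf x) := by
      rw [hH, hH, ← mul_sub, ← hs₁def, ← hs₂def,
        ← integral_sub hint1.integrableOn hint2.integrableOn]
      congr 1
      refine setIntegral_congr_fun measurableSet_Ioi fun x _ => ?_
      have harg : (1 - π) * (Real.sqrt 2 * x + 2 * c) = (1 - π) * Real.sqrt 2 * (x - x₀) := by
        rw [hx₀def]; linear_combination (π - 1) * c * h2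
      have hargL : x - L = x + Real.sqrt 2 * zβ := by rw [hLdef]; ring
      rw [harg, hargL]
      ring
    have hβpos : 0 < 1 / (1 - β) ^ 2 := by
      have h1β : 0 < 1 - β := by linarith [hβ.2]
      positivity
    nlinarith [mul_pos hβpos key]
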